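/- With p(n₁,n₂) = d·a^{n₁}·b^{n₂}·F[-n₁,-n₂;1,z] as above (a = N_T/(1+N_T), b = N_S(N_T-η+1)/((1+N_S)(1+N_T)), d = 1/((1+N_T)(1+N_S)), z = η/((N_T-η+1)N_T), 0<η<1, N_S>0, N_T>η), the second marginal mean satisfies ∑_{n₁,n₂} n₂ · p(n₁,n₂) = N_S. -/

import Mathlib

open Finset

theorem stmt12 (η NS NT : ℝ) (hη0 : 0 < η) (hη1 : η < 1) (hNS : 0 < NS) (hNT : η < NT) :
    let a := NT / (1 + NT)
    let b := NS * (NT - η + 1) / ((1 + NS) * (1 + NT))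
    let d := 1 / ((1 + NT) * (1 + NS))
    let z := η / ((NT - η + 1) * NT)
    HasSum (fun p : ℕ × ℕ => (p.2 : ℝ) * (d * a ^ p.1 * b ^ p.2 *
      ∑ k ∈ Finset.range (min p.1 p.2 + 1), (p.1.choose k : ℝ) * (p.2.choose k : ℝ) * z ^ k))
      NS := by
  intro a b d z
  have haeq : a = NT / (1 + NT) := rfl
  have hbeq : b = NS * (NT - η + 1) / ((1 + NS) * (1 + NT)) := rfl
  have hdeq : d = 1 / ((1 + NT) * (1 + NS)) := rfl
  have hzeq : z = η / ((NT - η + 1) * NT) := rfl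
  clear_value a b d z
  have hNT0 : (0:ℝ) < NT := hη0.trans hNT
  have h1NT : (0:ℝ) < 1 + NT := by linarith
  have hK : (0:ℝ) < NT - η + 1 := by linarith
  have h1NS : (0:ℝ) < 1 + NS := by linarith
  have ha0 : 0 ≤ a := by rw [haeq]; positivity
  have ha1 : a < 1 := by rw [haeq]; rw [div_lt_one h1NT]; linarith
  have hz0 : 0 ≤ z := by rw [hzeq]; exact le_of_lt (div_pos hη0 (mul_pos hK hNT0))
  have hb0 : 0 ≤ b := by rw [hbeq]; positivity
  have hd0 : 0 ≤ d := by rw [hdeq]; positivity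
  set c : ℝ := NS / (1 + NS) with hceq
  clear_value c
  have hc0 : 0 ≤ c := by rw [hceq]; positivity
  have hc1 : c < 1 := by rw [hceq, div_lt_one h1NS]; linarith
  set w : ℝ := z * NT with hweq
  clear_value w
  -- per-k geometric sum over n₁
  have hk : ∀ k : ℕ, HasSum (fun n : ℕ => (n.choose k : ℝ) * a ^ n) (NT ^ k * (1 + NT)) := by
    intro k
    have hna : ‖a‖ < 1 := by rwa [Real.norm_eq_abs, abs_of_nonneg ha0]
    have h := (hasSum_choose_mul_geometric_of_norm_lt_one (𝕜 := ℝ) k hna).mul_left (a ^ k)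
    have heq : (fun n : ℕ => a ^ k * (((n + k).choose k : ℝ) * a ^ n))
        = fun n : ℕ => (((n + k).choose k : ℝ) * a ^ (n + k)) := by
      funext n; rw [pow_add]; ring
    rw [heq] at h
    rw [hasSum_nat_add_iff (f := fun n : ℕ => ((n.choose k : ℝ) * a ^ n)) k] at h
    have hz : ∑ i ∈ range k, ((i.choose k : ℝ) * a ^ i) = 0 := by
      apply Finset.sum_eq_zero
      intro i hi
      rw [Nat.choose_eq_zero_of_lt (mem_range.1 hi)]
      simp
    rw [hz, add_zero] at h
    convert h using 1
    · rfl
    have h1a : 1 - a = 1 / (1 + NT) := by rw [haeq]; field_simp; ring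
    rw [h1a, haeq, div_pow, div_pow, one_pow, div_div_eq_mul_div, one_mul, pow_succ]
    field_simp
  have hbc : b * (1 + w) = c := by
    rw [hbeq, hweq, hzeq, hceq]
    field_simp
    ring
  have hd1 : d * (1 + NT) = 1 / (1 + NS) := by rw [hdeq]; field_simp
  -- the row sums
  have hrow : ∀ n₂ : ℕ, HasSum (fun n₁ : ℕ => (n₂ : ℝ) * (d * a ^ n₁ * b ^ n₂ *
      ∑ k ∈ range (min n₁ n₂ + 1), (n₁.choose k : ℝ) * (n₂.choose k : ℝ) * z ^ k))
      ((n₂ : ℝ) * ((1 / (1 + NS)) * c ^ n₂)) := by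
    intro n₂
    have hfun : ∀ n₁ : ℕ, (n₂ : ℝ) * (d * a ^ n₁ * b ^ n₂ *
        ∑ k ∈ range (min n₁ n₂ + 1), (n₁.choose k : ℝ) * (n₂.choose k : ℝ) * z ^ k)
        = ∑ k ∈ range (n₂ + 1),
            ((n₂ : ℝ) * d * b ^ n₂ * (n₂.choose k : ℝ) * z ^ k) * ((n₁.choose k : ℝ) * a ^ n₁) := by
      intro n₁
      have hsub : ∑ k ∈ range (min n₁ n₂ + 1), (n₁.choose k : ℝ) * (n₂.choose k : ℝ) * z ^ k
          = ∑ k ∈ range (n₂ + 1), (n₁.choose k : ℝ) * (n₂.choose k : ℝ) * z ^ k := by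
        apply Finset.sum_subset
        · exact Finset.range_subset_range.2 (by omega)
        · intro k hk1 hk2
          rw [mem_range] at hk1 hk2
          have : n₁ < k := by omega
          rw [Nat.choose_eq_zero_of_lt this]
          simp
      rw [hsub, Finset.mul_sum, Finset.mul_sum]
      exact Finset.sum_congr rfl fun k _ => by ring
    simp only [hfun]
    have hs := hasSum_sum (s := range (n₂ + 1))
      (f := fun k (n₁ : ℕ) => ((n₂ : ℝ) * d * b ^ n₂ * (n₂.choose k : ℝ) * z ^ k) * ((n₁.choose k : ℝ) * a ^ n₁))
      (a := fun k => ((n₂ : ℝ) * d * b ^ n₂ * (n₂.choose k : ℝ) * z ^ k) * (NT ^ k * (1 + NT)))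
      (fun k _ => (hk k).mul_left _)
    convert hs using 1
    have : ∀ k ∈ range (n₂ + 1),
        ((n₂ : ℝ) * d * b ^ n₂ * (n₂.choose k : ℝ) * z ^ k) * (NT ^ k * (1 + NT))
        = ((n₂ : ℝ) * d * (1 + NT) * b ^ n₂) * ((n₂.choose k : ℝ) * w ^ k) := by
      intro k _
      rw [hweq, mul_pow]; ring
    rw [Finset.sum_congr rfl this, ← Finset.mul_sum]
    have hbinom : ∑ k ∈ range (n₂ + 1), (n₂.choose k : ℝ) * w ^ k = (1 + w) ^ n₂ := by
      rw [add_comm 1 w, add_pow]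
      exact Finset.sum_congr rfl fun k hk => by rw [one_pow]; ring
    rw [hbinom, ← hbc, mul_pow]
    linear_combination (-(n₂ : ℝ) * b ^ n₂ * (1 + w) ^ n₂) * hd1
  -- sum of row sums
  have hS : HasSum (fun n₂ : ℕ => (n₂ : ℝ) * ((1 / (1 + NS)) * c ^ n₂)) NS := by
    have hnc : ‖c‖ < 1 := by rwa [Real.norm_eq_abs, abs_of_nonneg hc0]
    have h := (hasSum_coe_mul_geometric_of_norm_lt_one (𝕜 := ℝ) hnc).mul_left (1 / (1 + NS))
    have heq : (fun n : ℕ => (1 / (1 + NS)) * ((n : ℝ) * c ^ n))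
        = fun n : ℕ => (n : ℝ) * ((1 / (1 + NS)) * c ^ n) := by funext n; ring
    rw [heq] at h
    convert h using 1
    · rfl
    have h1c : 1 - c = 1 / (1 + NS) := by rw [hceq]; field_simp; ring
    rw [h1c, hceq]
    field_simp
  -- assemble
  set F : ℕ × ℕ → ℝ := fun p => (p.2 : ℝ) * (d * a ^ p.1 * b ^ p.2 *
      ∑ k ∈ range (min p.1 p.2 + 1), (p.1.choose k : ℝ) * (p.2.choose k : ℝ) * z ^ k) with hF
  set G : ℕ × ℕ → ℝ := fun q => F (q.2, q.1) with hG
  have hG0 : 0 ≤ G := by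
    intro q
    apply mul_nonneg (Nat.cast_nonneg _)
    apply mul_nonneg (mul_nonneg (mul_nonneg hd0 (pow_nonneg ha0 _)) (pow_nonneg hb0 _))
    apply Finset.sum_nonneg
    intro k _
    positivity
  have hGrow : ∀ n₂ : ℕ, HasSum (fun n₁ => G (n₂, n₁)) ((n₂ : ℝ) * ((1 / (1 + NS)) * c ^ n₂)) :=
    fun n₂ => hrow n₂
  have hGsum : Summable G := by
    rw [summable_prod_of_nonneg hG0]
    refine ⟨fun n₂ => (hGrow n₂).summable, ?_⟩
    have heq2 : (fun n₂ : ℕ => ∑' n₁, G (n₂, n₁))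
        = fun n₂ : ℕ => (n₂ : ℝ) * ((1 / (1 + NS)) * c ^ n₂) := by
      funext n₂; exact (hGrow n₂).tsum_eq
    rw [heq2]
    exact hS.summable
  obtain ⟨t, hGt⟩ := hGsum
  have hrowsum : HasSum (fun n₂ : ℕ => (n₂ : ℝ) * ((1 / (1 + NS)) * c ^ n₂)) t :=
    hGt.prod_fiberwise hGrow
  have htNS : t = NS := hrowsum.unique hS
  have hFG : F = G ∘ (Equiv.prodComm ℕ ℕ) := by funext p; rfl
  have : HasSum F NS := by
    rw [hFG]
    exact (Equiv.prodComm ℕ ℕ).hasSum_iff.2 (htNS ▸ hGt)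
  exact this
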